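/- arXiv:math/0309340 — 2 statements merged into one kernel-verified Lean document; each statement's English description precedes it below -/
import Mathlib

section
/- (Proposition 1.) Let ζ ∈ ℂ with 0 ≤ |ζ| < 1, set s = |ζ|², u = ζ/(1-s), v = conj(ζ)/(1-s). Let a, b, c, d ∈ ℂ (representing z_u, z_v, z̄_u, z̄_v), and define the chain-rule combinations z_ζ = (b·conj(ζ)² + a)/(1-s)², z̄_ζ = (d·conj(ζ)² + c)/(1-s)², z_ζ̄ = (a·ζ² + b)/(1-s)², z̄_ζ̄ = (c·ζ² + d)/(1-s)². Then the pair of equations (d - a = 0 and v²·b + (1+2uv)·d + u²·c = 0) holds if and only if both ζ²·z̄_ζ + z_ζ = 0 and conj(ζ)²·z_ζ̄ + z̄_ζ̄ = 0 hold. -/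
open Complex

/-- Proposition 1: in the hodographic variables `ζ`, `ζ̄` with
`u = ζ/(1-|ζ|²)`, `v = ζ̄/(1-|ζ|²)`, and with the chain-rule expressions
`z_ζ = (z_v ζ̄² + z_u)/(1-|ζ|²)²` etc., the linearized hodograph system
`z̄_v - z_u = 0`, `v²z_v + (1+2uv)z̄_v + u²z̄_u = 0` is equivalent to
`ζ²z̄_ζ + z_ζ = 0` together with its conjugate equation `ζ̄²z_ζ̄ + z̄_ζ̄ = 0`.
Here `a = z_u, b = z_v, c = z̄_u, d = z̄_v`. -/
theorem stmt_3 (ζ : ℂ) (hζ : ‖ζ‖ < 1) (s : ℝ) (hs : s = ‖ζ‖ ^ 2)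
    (u v : ℂ) (hu : u = ζ / (1 - (s : ℂ))) (hv : v = starRingEnd ℂ ζ / (1 - (s : ℂ)))
    (a b c d zζ zbζ zζb zbζb : ℂ)
    (hzζ : zζ = (b * (starRingEnd ℂ ζ) ^ 2 + a) / (1 - (s : ℂ)) ^ 2)
    (hzbζ : zbζ = (d * (starRingEnd ℂ ζ) ^ 2 + c) / (1 - (s : ℂ)) ^ 2)
    (hzζb : zζb = (a * ζ ^ 2 + b) / (1 - (s : ℂ)) ^ 2)
    (hzbζb : zbζb = (c * ζ ^ 2 + d) / (1 - (s : ℂ)) ^ 2) :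
    (d - a = 0 ∧ v ^ 2 * b + (1 + 2 * u * v) * d + u ^ 2 * c = 0) ↔
      (ζ ^ 2 * zbζ + zζ = 0 ∧ (starRingEnd ℂ ζ) ^ 2 * zζb + zbζb = 0) := by
  have hs1 : s < 1 := by rw [hs]; nlinarith [norm_nonneg ζ]
  have hsnn : (0:ℝ) ≤ s := by rw [hs]; positivity
  have ht : (1 - (s : ℂ)) ≠ 0 := by
    simp only [sub_ne_zero]
    intro h
    have : (1:ℝ) = s := by exact_mod_cast h
    linarith
  have ht2 : (1 + (s : ℂ)) ≠ 0 := by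
    intro h
    have : (1:ℝ) + s = 0 := by exact_mod_cast h
    linarith
  have hcs : ζ * starRingEnd ℂ ζ = (s : ℂ) := by
    rw [Complex.mul_conj, hs]
    norm_cast
    rw [Complex.sq_norm]
  have hpow : ((1 - (s:ℂ))^2) ≠ 0 := pow_ne_zero 2 ht
  set w := starRingEnd ℂ ζ with hw
  have hB : v ^ 2 * b + (1 + 2 * u * v) * d + u ^ 2 * c
      = (w^2*b + (1+(s:ℂ)^2)*d + ζ^2*c) / (1-(s:ℂ))^2 := by
    have ht' : (1 - ζ * w) ≠ 0 := by rw [hcs]; exact ht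
    rw [hu, hv, ← hcs]
    have ht'' : (1 - w * ζ) ≠ 0 := by rw [mul_comm]; exact ht'
    field_simp
    ring
  have hR1 : ζ ^ 2 * zbζ + zζ
      = ((s:ℂ)^2*d + ζ^2*c + w^2*b + a) / (1-(s:ℂ))^2 := by
    have ht' : (1 - ζ * w) ≠ 0 := by rw [hcs]; exact ht
    rw [hzbζ, hzζ, ← hcs]
    field_simp
    ring
  have hR2 : w ^ 2 * zζb + zbζb
      = ((s:ℂ)^2*a + w^2*b + ζ^2*c + d) / (1-(s:ℂ))^2 := by
    have ht' : (1 - ζ * w) ≠ 0 := by rw [hcs]; exact ht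
    rw [hzζb, hzbζb, ← hcs]
    field_simp
    ring
  rw [hB, hR1, hR2, div_eq_zero_iff, div_eq_zero_iff, div_eq_zero_iff]
  simp only [hpow, or_false]
  constructor
  · rintro ⟨h1, h2⟩
    exact ⟨by linear_combination h2 - h1, by linear_combination h2 - (s:ℂ)^2 * h1⟩
  · rintro ⟨h1, h2⟩
    have h3 : ((s:ℂ)^2 - 1) * (d - a) = 0 := by linear_combination h1 - h2
    have hsq : ((s:ℂ)^2 - 1) ≠ 0 := by
      intro h
      apply ht
      have : ((s:ℂ) - 1) * ((s:ℂ) + 1) = 0 := by linear_combination h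
      rcases mul_eq_zero.mp this with h' | h'
      · linear_combination -h'
      · exact absurd (by linear_combination h') ht2
    have hA : d - a = 0 := by
      rcases mul_eq_zero.mp h3 with h | h
      · exact absurd h hsq
      · exact h
    exact ⟨hA, by linear_combination h1 + hA⟩
end

section
/- Let D ⊆ ℂ be open, F : ℂ → ℂ holomorphic (differentiable) on D, and let P₁, P₂, P₃ : ℂ → ℂ be holomorphic on D with derivatives P₁′(ζ) = (1 - ζ²)·F′(ζ), P₂′(ζ) = i·(1 + ζ²)·F′(ζ), P₃′(ζ) = 2·ζ·F′(ζ) for all ζ ∈ D. Define X : D → ℝ³ by X(ζ) = (Re P₁(ζ), Re P₂(ζ), Re P₃(ζ)). Then at every point ζ ∈ D the partial derivatives of X with respect to the real coordinates ζ₁ = Re ζ and ζ₂ = Im ζ satisfy ‖∂X/∂ζ₁‖² = ‖∂X/∂ζ₂‖² and ⟨∂X/∂ζ₁, ∂X/∂ζ₂⟩ = 0. That is, the Weierstrass–Enneper representation X(ζ) = (x₀, y₀, φ₀) + Re ∫ ((1-ω²)F′(ω), i(1+ω²)F′(ω), 2ωF′(ω)) dω is conformal: ζ₁, ζ₂ are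 isothermal coordinates. -/
open scoped RealInnerProductSpace

/-- Conformality of the Weierstrass–Enneper representation: if `F` is holomorphic
on an open `D ⊆ ℂ` and `P₁, P₂, P₃` are (holomorphic) primitives on `D` of
`(1-ζ²)F′`, `i(1+ζ²)F′`, `2ζF′` respectively, then
`X = (Re P₁, Re P₂, Re P₃) : D → ℝ³` satisfies `‖X_{ζ₁}‖² = ‖X_{ζ₂}‖²` and
`⟨X_{ζ₁}, X_{ζ₂}⟩ = 0` at every point of `D`: the real coordinates
`ζ₁ = Re ζ`, `ζ₂ = Im ζ` are isothermal. -/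
theorem stmt_8 (D : Set ℂ) (hD : IsOpen D) (F P₁ P₂ P₃ : ℂ → ℂ)
    (hF : DifferentiableOn ℂ F D)
    (hP₁ : ∀ ζ ∈ D, HasDerivAt P₁ ((1 - ζ ^ 2) * deriv F ζ) ζ)
    (hP₂ : ∀ ζ ∈ D, HasDerivAt P₂ (Complex.I * (1 + ζ ^ 2) * deriv F ζ) ζ)
    (hP₃ : ∀ ζ ∈ D, HasDerivAt P₃ (2 * ζ * deriv F ζ) ζ)
    (X : ℂ → EuclideanSpace ℝ (Fin 3))
    (hX : X = fun ζ => (EuclideanSpace.equiv (Fin 3) ℝ).symm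
      ![(P₁ ζ).re, (P₂ ζ).re, (P₃ ζ).re]) :
    ∀ ζ ∈ D,
      ‖fderiv ℝ X ζ 1‖ ^ 2 = ‖fderiv ℝ X ζ Complex.I‖ ^ 2 ∧
        ⟪fderiv ℝ X ζ 1, fderiv ℝ X ζ Complex.I⟫ = 0 := by
  intro ζ hζ
  set f := deriv F ζ with hf
  set c : Fin 3 → ℂ := ![(1 - ζ ^ 2) * f, Complex.I * (1 + ζ ^ 2) * f, 2 * ζ * f] with hc
  set L : Fin 3 → (ℂ →L[ℝ] ℝ) := fun i =>
    Complex.reCLM.comp (((1 : ℂ →L[ℂ] ℂ).smulRight (c i)).restrictScalars ℝ) with hL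
  have hd : ∀ i : Fin 3, HasFDerivAt (fun z => (![(P₁ z).re, (P₂ z).re, (P₃ z).re] i)) (L i) ζ := by
    intro i
    fin_cases i
    · exact Complex.reCLM.hasFDerivAt.comp ζ ((hP₁ ζ hζ).hasFDerivAt.restrictScalars ℝ)
    · exact Complex.reCLM.hasFDerivAt.comp ζ ((hP₂ ζ hζ).hasFDerivAt.restrictScalars ℝ)
    · exact Complex.reCLM.hasFDerivAt.comp ζ ((hP₃ ζ hζ).hasFDerivAt.restrictScalars ℝ)
  have hg : HasFDerivAt (fun z => ![(P₁ z).re, (P₂ z).re, (P₃ z).re])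
      (ContinuousLinearMap.pi L) ζ := hasFDerivAt_pi.2 hd
  have hXd : HasFDerivAt X
      (((EuclideanSpace.equiv (Fin 3) ℝ).symm : (Fin 3 → ℝ) →L[ℝ] EuclideanSpace ℝ (Fin 3)).comp
        (ContinuousLinearMap.pi L)) ζ := by
    rw [hX]
    exact (((EuclideanSpace.equiv (Fin 3) ℝ).symm :
      (Fin 3 → ℝ) →L[ℝ] EuclideanSpace ℝ (Fin 3)).hasFDerivAt).comp ζ hg
  rw [hXd.fderiv]
  constructor
  · rw [← real_inner_self_eq_norm_sq, ← real_inner_self_eq_norm_sq]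
    simp only [ContinuousLinearMap.comp_apply, ContinuousLinearMap.pi_apply,
      ContinuousLinearEquiv.coe_coe, PiLp.inner_apply, RCLike.inner_apply, conj_trivial,
      EuclideanSpace.equiv, PiLp.continuousLinearEquiv_symm_apply, PiLp.toLp_apply, Fin.sum_univ_three, hL,
      ContinuousLinearMap.coe_restrictScalars', ContinuousLinearMap.smulRight_apply,
      ContinuousLinearMap.one_apply, smul_eq_mul, Complex.reCLM_apply, hc,
      Matrix.cons_val_zero, Matrix.cons_val_one, Matrix.head_cons, Matrix.cons_val_two,
      Matrix.tail_cons, Complex.mul_re, Complex.mul_im, Complex.one_re, Complex.one_im,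
      Complex.I_re, Complex.I_im, Complex.sub_re, Complex.sub_im, Complex.add_re,
      Complex.add_im, Complex.re_ofNat, Complex.im_ofNat, pow_two]
    ring
  · simp only [ContinuousLinearMap.comp_apply, ContinuousLinearMap.pi_apply,
      ContinuousLinearEquiv.coe_coe, PiLp.inner_apply, RCLike.inner_apply, conj_trivial,
      EuclideanSpace.equiv, PiLp.continuousLinearEquiv_symm_apply, PiLp.toLp_apply, Fin.sum_univ_three, hL,
      ContinuousLinearMap.coe_restrictScalars', ContinuousLinearMap.smulRight_apply,
      ContinuousLinearMap.one_apply, smul_eq_mul, Complex.reCLM_apply, hc,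
      Matrix.cons_val_zero, Matrix.cons_val_one, Matrix.head_cons, Matrix.cons_val_two,
      Matrix.tail_cons, Complex.mul_re, Complex.mul_im, Complex.one_re, Complex.one_im,
      Complex.I_re, Complex.I_im, Complex.sub_re, Complex.sub_im, Complex.add_re,
      Complex.add_im, Complex.re_ofNat, Complex.im_ofNat, pow_two]
    ring
end
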